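/- Let κ : I → ℝ be a positive differentiable function on an open interval I satisfying a·(s + c)·κ(s) = (1/κ(s))' for all s ∈ I, where a > 0 and c ∈ ℝ are constants. Then there exists b ∈ ℝ such that κ(s) = 1 / √(a·s·(s + 2c) + b) for all s ∈ I (where a·s·(s+2c) + b > 0 on I). -/

import Mathlib

theorem stmt_9 (x y a c : ℝ) (ha : 0 < a) (κ : ℝ → ℝ)
    (hpos : ∀ s ∈ Set.Ioo x y, 0 < κ s)
    (hode : ∀ s ∈ Set.Ioo x y,
      HasDerivAt (fun t => 1 / κ t) (a * (s + c) * κ s) s) :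
    ∃ b : ℝ, ∀ s ∈ Set.Ioo x y,
      0 < a * s * (s + 2 * c) + b ∧
      κ s = 1 / Real.sqrt (a * s * (s + 2 * c) + b) := by
  rcases Set.eq_empty_or_nonempty (Set.Ioo x y) with he | ⟨s₀, hs₀⟩
  · exact ⟨0, fun s hs => absurd hs (by simp [he])⟩
  set g : ℝ → ℝ := fun t => (1 / κ t) ^ 2 - a * t * (t + 2 * c) with hg
  have hderiv : ∀ s ∈ Set.Ioo x y, HasDerivAt g 0 s := by
    intro s hs
    have h1 : HasDerivAt (fun t => (1 / κ t) ^ 2)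
        (2 * (1 / κ s) * (a * (s + c) * κ s)) s := by
      simpa using ((hode s hs).fun_pow 2)
    have h2 : HasDerivAt (fun t : ℝ => a * t * (t + 2 * c))
        (a * (s + 2 * c) + a * s) s := by
      have := ((hasDerivAt_id s).const_mul a).fun_mul
        ((hasDerivAt_id s).add_const (2 * c))
      simpa [mul_comm, mul_assoc] using this
    have hκ : κ s ≠ 0 := (hpos s hs).ne'
    have := h1.sub h2
    have heq : 2 * (1 / κ s) * (a * (s + c) * κ s) - (a * (s + 2 * c) + a * s) = 0 := by
      field_simp
      ring
    rw [heq] at this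
    exact this
  have hconv : Convex ℝ (Set.Ioo x y) := convex_Ioo x y
  have hconst : ∀ s ∈ Set.Ioo x y, g s = g s₀ := by
    intro s hs
    apply hconv.is_const_of_fderivWithin_eq_zero (𝕜 := ℝ)
      (fun t ht => ((hderiv t ht).differentiableAt).differentiableWithinAt)
      ?_ hs hs₀
    intro t ht
    have : fderivWithin ℝ g (Set.Ioo x y) t = fderiv ℝ g t :=
      fderivWithin_of_isOpen isOpen_Ioo ht
    rw [this, ((hderiv t ht).hasFDerivAt).fderiv]
    ext v; simp
  refine ⟨g s₀, fun s hs => ?_⟩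
  have hb : a * s * (s + 2 * c) + g s₀ = (1 / κ s) ^ 2 := by
    rw [← hconst s hs]; simp only [hg]; ring
  have hκ : 0 < κ s := hpos s hs
  constructor
  · rw [hb]; positivity
  · rw [hb, Real.sqrt_sq (by positivity)]
    field_simp
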